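/- Let A₁, …, A_h ∈ ℝ^{d×d} be matrices with Σᵢ rank(Aᵢ) ≤ d, and suppose there exist indices m ≠ m' and a row index k such that the k-th row of A_m is nonzero and lies in the row space of A_{m'}. Then there exists a nonzero vector x ∈ ℝ^d with Aᵢ x = 0 for every i = 1, …, h. -/

import Mathlib

open Matrix

/-- The row space of a matrix: the span of its rows, i.e. the range of `x ↦ Aᵀ x`. -/
def rowSpace {m n : ℕ} (A : Matrix (Fin m) (Fin n) ℝ) : Submodule ℝ (Fin n → ℝ) :=
  LinearMap.range (Matrix.mulVecLin Aᵀ)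

open Module Submodule

-- row k of A is in rowSpace A
lemma row_mem_rowSpace {m n : ℕ} (A : Matrix (Fin m) (Fin n) ℝ) (k : Fin m) :
    A k ∈ rowSpace A := by
  refine ⟨Pi.single k 1, ?_⟩
  simp [Matrix.mulVecLin_apply, Matrix.mulVec_single]
  rfl

-- kernel characterization
lemma mulVec_eq_zero_iff {n : ℕ} (A : Matrix (Fin n) (Fin n) ℝ) (x : Fin n → ℝ) :
    A.mulVec x = 0 ↔ ∀ v ∈ rowSpace A, v ⬝ᵥ x = 0 := by
  constructor
  · rintro hx v ⟨y, rfl⟩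
    rw [Matrix.mulVecLin_apply, dotProduct_comm, Matrix.dotProduct_mulVec,
      Matrix.vecMul_transpose, hx]
    simp
  · intro hv
    funext j
    have := hv (A j) (row_mem_rowSpace A j)
    simpa [Matrix.mulVec, dotProduct_comm] using this

-- toDualEquiv is dot product
lemma toDualEquiv_eq_dot {n : ℕ} (x v : Fin n → ℝ) :
    (Pi.basisFun ℝ (Fin n)).toDualEquiv x v = x ⬝ᵥ v := by
  have : (Pi.basisFun ℝ (Fin n)).toDualEquiv x =
      { toFun := fun v => x ⬝ᵥ v,
        map_add' := fun a b => dotProduct_add x a b,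
        map_smul' := fun c a => dotProduct_smul c x a } := by
    apply Basis.ext (Pi.basisFun ℝ (Fin n))
    intro i
    have h1 := (Pi.basisFun ℝ (Fin n)).toDual_apply_left x i
    simp only [Basis.toDualEquiv_apply, LinearMap.coe_mk, AddHom.coe_mk]
    rw [h1]
    simp [dotProduct_single]
  rw [this]
  rfl

lemma finrank_biSup_le {M : Type*} [AddCommGroup M] [Module ℝ M] [FiniteDimensional ℝ M]
    {ι : Type*} [DecidableEq ι] (s : Finset ι) (W : ι → Submodule ℝ M) :
    finrank ℝ ↥(⨆ i ∈ s, W i) ≤ ∑ i ∈ s, finrank ℝ ↥(W i) := by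
  induction s using Finset.induction with
  | empty => simp
  | @insert a s hx ih =>
    rw [Finset.sum_insert hx]
    rw [Finset.iSup_insert]
    calc finrank ℝ ↥(W a ⊔ ⨆ i ∈ s, W i) ≤ finrank ℝ ↥(W a) + finrank ℝ ↥(⨆ i ∈ s, W i) :=
          Submodule.finrank_add_le_finrank_add_finrank _ _
      _ ≤ _ := Nat.add_le_add_left ih _

theorem exists_common_kernel_vector {d h : ℕ}
    (A : Fin h → Matrix (Fin d) (Fin d) ℝ)
    (hrank : ∑ i, Module.finrank ℝ ↥(rowSpace (A i)) ≤ d)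
    (hrow : ∃ m m' : Fin h, m ≠ m' ∧ ∃ k : Fin d,
      (A m) k ≠ 0 ∧ (A m) k ∈ rowSpace (A m')) :
    ∃ x : Fin d → ℝ, x ≠ 0 ∧ ∀ i, (A i).mulVec x = 0 := by
  classical
  obtain ⟨m, m', hmm', k, hk0, hkmem⟩ := hrow
  set V : Fin h → Submodule ℝ (Fin d → ℝ) := fun i => rowSpace (A i) with hVdef
  -- the intersection V m ⊓ V m' is nontrivial
  have hinf : 0 < finrank ℝ ↥(V m ⊓ V m') := by
    rw [finrank_pos_iff_exists_ne_zero]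
    refine ⟨⟨A m k, ⟨row_mem_rowSpace (A m) k, hkmem⟩⟩, fun hc => hk0 ?_⟩
    exact congrArg Subtype.val hc
  -- auxiliary family absorbing the overlap
  set W : Fin h → Submodule ℝ (Fin d → ℝ) :=
    fun i => if i = m then ⊥ else if i = m' then V m ⊔ V m' else V i with hWdef
  have hWm : W m = ⊥ := by simp [hWdef]
  have hWm' : W m' = V m ⊔ V m' := by simp [hWdef, hmm'.symm]
  have hWo : ∀ i, i ≠ m → i ≠ m' → W i = V i := by
    intro i h1 h2; simp [hWdef, h1, h2]
  have hle : (⨆ i, V i) ≤ ⨆ i, W i := by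
    refine iSup_le fun i => ?_
    by_cases h1 : i = m
    · subst h1
      exact le_trans (le_sup_left.trans hWm'.ge) (le_iSup W m')
    · by_cases h2 : i = m'
      · subst h2
        exact le_trans (le_sup_right.trans hWm'.ge) (le_iSup W i)
      · exact le_trans (hWo i h1 h2).ge (le_iSup W i)
  -- sum splitting
  have hsplit : ∀ f : Fin h → ℕ,
      ∑ i, f i = f m + f m' + ∑ i ∈ (Finset.univ.erase m).erase m', f i := by
    intro f
    rw [← Finset.add_sum_erase _ f (Finset.mem_univ m),
      ← Finset.add_sum_erase _ f (Finset.mem_erase.2 ⟨Ne.symm hmm', Finset.mem_univ m'⟩)]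
    ring
  have hsum_eq : ∀ i ∈ (Finset.univ.erase m).erase m',
      finrank ℝ ↥(W i) = finrank ℝ ↥(V i) := by
    intro i hi
    rw [Finset.mem_erase, Finset.mem_erase] at hi
    rw [hWo i hi.2.1 hi.1]
  have hWsum : ∑ i, finrank ℝ ↥(W i) + finrank ℝ ↥(V m ⊓ V m') = ∑ i, finrank ℝ ↥(V i) := by
    rw [hsplit (fun i => finrank ℝ ↥(W i)), hsplit (fun i => finrank ℝ ↥(V i)),
      Finset.sum_congr rfl hsum_eq, hWm, hWm']
    have := Submodule.finrank_sup_add_finrank_inf_eq (V m) (V m')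
    simp only [finrank_bot]
    omega
  -- dimension of the sup of row spaces
  have hdim : finrank ℝ ↥(⨆ i, V i) < d := by
    have h1 : finrank ℝ ↥(⨆ i, V i) ≤ finrank ℝ ↥(⨆ i, W i) :=
      Submodule.finrank_mono hle
    have h2 : (⨆ i, W i) = ⨆ i ∈ Finset.univ, W i := by simp
    have h3 := finrank_biSup_le (Finset.univ : Finset (Fin h)) W
    rw [← h2] at h3
    have h4 : ∑ i, finrank ℝ ↥(V i) ≤ d := hrank
    omega
  -- duality
  set e := (Pi.basisFun ℝ (Fin d)).toDualEquiv with hedef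
  set K := Submodule.comap (e : (Fin d → ℝ) →ₗ[ℝ] Module.Dual ℝ (Fin d → ℝ))
    ((⨆ i, V i).dualAnnihilator) with hKdef
  have hKmem : ∀ x : Fin d → ℝ, x ∈ K ↔ ∀ i, (A i).mulVec x = 0 := by
    intro x
    rw [hKdef, Submodule.mem_comap, Submodule.mem_dualAnnihilator]
    constructor
    · intro hx i
      rw [mulVec_eq_zero_iff]
      intro v hv
      have := hx v (le_iSup V i hv)
      rwa [LinearEquiv.coe_coe, toDualEquiv_eq_dot, dotProduct_comm] at this
    · intro hx
      have hker : (⨆ i, V i) ≤ LinearMap.ker (e x) := by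
        refine iSup_le fun i v hv => ?_
        rw [LinearMap.mem_ker, toDualEquiv_eq_dot, dotProduct_comm]
        exact (mulVec_eq_zero_iff (A i) x).1 (hx i) v hv
      intro v hv
      exact hker hv
  -- K has positive dimension
  have hKrank : 0 < finrank ℝ ↥K := by
    have h1 : finrank ℝ ↥K = finrank ℝ ↥((⨆ i, V i).dualAnnihilator) := by
      rw [hKdef, Submodule.comap_equiv_eq_map_symm]
      exact LinearEquiv.finrank_map_eq e.symm _
    have h2 : finrank ℝ ↥((⨆ i, V i).dualAnnihilator)
        = finrank ℝ ((Fin d → ℝ) ⧸ (⨆ i, V i)) :=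
      (LinearEquiv.finrank_eq (Subspace.quotEquivAnnihilator (⨆ i, V i))).symm
    have h3 := Submodule.finrank_quotient_add_finrank (⨆ i, V i)
    have h4 : finrank ℝ (Fin d → ℝ) = d := by simp
    omega
  obtain ⟨⟨x, hxK⟩, hx0⟩ := finrank_pos_iff_exists_ne_zero.1 hKrank
  refine ⟨x, ?_, (hKmem x).1 hxK⟩
  intro hx
  exact hx0 (by simpa [Submodule.mk_eq_zero] using hx)
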